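/- Let E be a symmetric n×n matrix with at most αn nonzeros per row/column, and U* an n×r matrix with orthonormal columns whose rows have norm at most μ√r/√n. Then for any n×n matrix B and integers p, q ≥ 0, max_{i,j} |eᵢᵀ Eᵖ U* (U*)ᵀ B U* (U*)ᵀ E^q e_j| ≤ (μ²r/n) (αn‖E‖_∞)^{p+q} ‖U*(U*)ᵀ B U*(U*)ᵀ‖₂. -/

import Mathlib

open Matrix
open scoped Matrix.Norms.L2Operator

/-- The spectral (operator) norm of a real matrix. -/
noncomputable def specNorm {m n : Type*} [Fintype m] [Fintype n] [DecidableEq n]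
    (A : Matrix m n ℝ) : ℝ :=
  ‖LinearMap.toContinuousLinearMap (Matrix.toEuclideanLin A)‖

/-- The maximum absolute value of the entries of a matrix. -/
noncomputable def maxEntry {m n : Type*} [Fintype m] [Fintype n]
    (A : Matrix m n ℝ) : ℝ := ⨆ i, ⨆ j, |A i j|

lemma specNorm_eq_l2 {m n : Type*} [Fintype m] [Fintype n] [DecidableEq n]
    (A : Matrix m n ℝ) : specNorm A = ‖A‖ := rfl

lemma real_conjTranspose_eq {m n : Type*} (A : Matrix m n ℝ) : Aᴴ = Aᵀ := by
  ext i j; simp [conjTranspose_apply]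

lemma l2_norm_one_le (r : ℕ) : ‖(1 : Matrix (Fin r) (Fin r) ℝ)‖ ≤ 1 := by
  have h := Matrix.l2_opNorm_conjTranspose_mul_self (1 : Matrix (Fin r) (Fin r) ℝ)
  rw [conjTranspose_one, mul_one] at h
  nlinarith [norm_nonneg (1 : Matrix (Fin r) (Fin r) ℝ)]

lemma triple_entry {n r : ℕ} (A₁ : Matrix (Fin n) (Fin r) ℝ) (C : Matrix (Fin r) (Fin r) ℝ)
    (A₂ : Matrix (Fin r) (Fin n) ℝ) (i j : Fin n) :
    (A₁ * C * A₂) i j = (fun k => A₁ i k) ⬝ᵥ (C *ᵥ (fun l => A₂ l j)) := by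
  simp only [Matrix.mul_apply, dotProduct, Matrix.mulVec, Finset.sum_mul, Finset.mul_sum]
  rw [Finset.sum_comm]
  simp [mul_assoc]

lemma dot_mulVec_bound {r : ℕ} (C : Matrix (Fin r) (Fin r) ℝ) (u w : Fin r → ℝ) :
    |u ⬝ᵥ (C *ᵥ w)| ≤ ‖C‖ * ‖(WithLp.linearEquiv 2 ℝ (Fin r → ℝ)).symm u‖ *
      ‖(WithLp.linearEquiv 2 ℝ (Fin r → ℝ)).symm w‖ := by
  have h1 : u ⬝ᵥ (C *ᵥ w) = inner ℝ ((WithLp.linearEquiv 2 ℝ (Fin r → ℝ)).symm u)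
      ((WithLp.linearEquiv 2 ℝ (Fin r → ℝ)).symm (C *ᵥ w)) := by
    simp [PiLp.inner_apply, RCLike.inner_apply, dotProduct, mul_comm]
  rw [h1]
  refine (abs_real_inner_le_norm _ _).trans ?_
  calc ‖(WithLp.linearEquiv 2 ℝ (Fin r → ℝ)).symm u‖ *
        ‖(WithLp.linearEquiv 2 ℝ (Fin r → ℝ)).symm (C *ᵥ w)‖
      ≤ ‖(WithLp.linearEquiv 2 ℝ (Fin r → ℝ)).symm u‖ *
        (‖C‖ * ‖(WithLp.linearEquiv 2 ℝ (Fin r → ℝ)).symm w‖) :=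
        mul_le_mul_of_nonneg_left (C.l2_opNorm_mulVec _) (norm_nonneg _)
    _ = _ := by ring

/-- Entrywise bound for sandwiched powers of a sparse symmetric matrix:
if `E` is symmetric with at most `α n` nonzeros per row/column and `U` has
orthonormal columns with incoherent rows (norm at most `μ√r/√n`), then for all
`p, q ≥ 0` and all `i, j`,
`|eᵢᵀ Eᵖ U Uᵀ B U Uᵀ E^q eⱼ| ≤ (μ²r/n)(αn‖E‖_∞)^{p+q} ‖U Uᵀ B U Uᵀ‖₂`. -/
theorem sandwiched_entry_bound {n r : ℕ}
    (E B : Matrix (Fin n) (Fin n) ℝ) (U : Matrix (Fin n) (Fin r) ℝ) (α μ : ℝ)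
    (hsym : Eᵀ = E)
    (hrowE : ∀ i, (({j | E i j ≠ 0} : Set (Fin n)).ncard : ℝ) ≤ α * n)
    (hcolE : ∀ j, (({i | E i j ≠ 0} : Set (Fin n)).ncard : ℝ) ≤ α * n)
    (horth : Uᵀ * U = 1)
    (hinc : ∀ i, Real.sqrt (∑ k, (U i k) ^ 2) ≤ μ * Real.sqrt r / Real.sqrt n) :
    ∀ (p q : ℕ) (i j : Fin n),
      |(E ^ p * (U * Uᵀ * B * U * Uᵀ) * E ^ q) i j| ≤
        (μ ^ 2 * r / n) * (α * n * maxEntry E) ^ (p + q) *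
          specNorm (U * Uᵀ * B * U * Uᵀ) := by
  intro p q i j
  set L := (WithLp.linearEquiv 2 ℝ (Fin r → ℝ)).symm with hL
  -- basic nonnegativity facts
  have habs : ∀ a b, |E a b| ≤ maxEntry E := by
    intro a b
    have h1 : |E a b| ≤ ⨆ b, |E a b| :=
      le_ciSup (f := fun b => |E a b|) (Set.Finite.bddAbove (Set.finite_range _)) b
    exact h1.trans (le_ciSup (f := fun a => ⨆ b, |E a b|)
      (Set.Finite.bddAbove (Set.finite_range _)) a)
  have hmaxE : 0 ≤ maxEntry E := (abs_nonneg _).trans (habs i i)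
  have hαn : (0:ℝ) ≤ α * n := le_trans (Nat.cast_nonneg _) (hrowE i)
  have hb : (0:ℝ) ≤ μ * Real.sqrt r / Real.sqrt n := (Real.sqrt_nonneg _).trans (hinc i)
  have hX : (0:ℝ) ≤ α * n * maxEntry E := mul_nonneg hαn hmaxE
  -- norm of rows of E^p * U
  have hnorm : ∀ (u : Fin r → ℝ), ‖L u‖ = Real.sqrt (∑ k, (u k)^2) := by
    intro u; rw [hL, EuclideanSpace.norm_eq]; simp [sq_abs]
  have key : ∀ (p : ℕ) (a : Fin n),
      ‖L (fun k => (E ^ p * U) a k)‖ ≤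
        (μ * Real.sqrt r / Real.sqrt n) * (α * n * maxEntry E) ^ p := by
    intro p
    induction p with
    | zero =>
      intro a
      rw [hnorm]
      simpa using hinc a
    | succ p ih =>
      intro a
      have hsum : L (fun k => (E ^ (p+1) * U) a k) =
          ∑ b, E a b • L (fun k => (E ^ p * U) b k) := by
        have hs : ∑ b, E a b • L (fun k => (E ^ p * U) b k)
            = L (∑ b, E a b • (fun k => (E ^ p * U) b k)) := by
          rw [map_sum]
          simp [_root_.map_smul]
        rw [hs]
        congr 1
        funext k
        have hE : E ^ (p+1) * U = E * (E ^ p * U) := by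
          rw [pow_succ', Matrix.mul_assoc]
        rw [hE]
        simp [Matrix.mul_apply, Finset.sum_apply]
      rw [hsum]
      calc ‖∑ b, E a b • L (fun k => (E ^ p * U) b k)‖
          ≤ ∑ b, ‖E a b • L (fun k => (E ^ p * U) b k)‖ := norm_sum_le _ _
        _ = ∑ b, |E a b| * ‖L (fun k => (E ^ p * U) b k)‖ := by
            simp [norm_smul]
        _ = ∑ b ∈ Finset.univ.filter (fun b => E a b ≠ 0),
              |E a b| * ‖L (fun k => (E ^ p * U) b k)‖ := by
            rw [Finset.sum_filter_of_ne]
            intro b _ hb0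
            intro h0
            apply hb0
            rw [h0, abs_zero, zero_mul]
        _ ≤ ∑ b ∈ Finset.univ.filter (fun b => E a b ≠ 0),
              maxEntry E * ((μ * Real.sqrt r / Real.sqrt n) * (α * n * maxEntry E) ^ p) := by
            apply Finset.sum_le_sum
            intro b _
            exact mul_le_mul (habs a b) (ih b) (norm_nonneg _) hmaxE
        _ = ((Finset.univ.filter (fun b => E a b ≠ 0)).card : ℝ) *
              (maxEntry E * ((μ * Real.sqrt r / Real.sqrt n) * (α * n * maxEntry E) ^ p)) := by
            rw [Finset.sum_const, nsmul_eq_mul]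
        _ ≤ (α * n) *
              (maxEntry E * ((μ * Real.sqrt r / Real.sqrt n) * (α * n * maxEntry E) ^ p)) := by
            apply mul_le_mul_of_nonneg_right _ (by positivity)
            have := hrowE a
            rwa [Set.ncard_eq_toFinset_card', Set.toFinset_setOf] at this
        _ = (μ * Real.sqrt r / Real.sqrt n) * (α * n * maxEntry E) ^ (p + 1) := by ring
  -- algebraic decompositions
  set M := U * Uᵀ * B * U * Uᵀ with hM
  have hdecomp : E ^ p * M * E ^ q = (E ^ p * U) * (Uᵀ * B * U) * (Uᵀ * E ^ q) := by
    simp only [hM, Matrix.mul_assoc]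
  have hqsym : Uᵀ * E ^ q = (E ^ q * U)ᵀ := by
    rw [Matrix.transpose_mul, Matrix.transpose_pow, hsym]
  -- spectral norm comparison
  have hU : ‖U‖ ≤ 1 := by
    have h1 : ‖Uᴴ * U‖ = ‖U‖ * ‖U‖ := Matrix.l2_opNorm_conjTranspose_mul_self U
    rw [real_conjTranspose_eq, horth] at h1
    have h2 := l2_norm_one_le r
    nlinarith [norm_nonneg U]
  have hUt : ‖Uᵀ‖ ≤ 1 := by
    rw [← real_conjTranspose_eq, Matrix.l2_opNorm_conjTranspose]; exact hU
  have hCM : ‖Uᵀ * B * U‖ ≤ ‖M‖ := by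
    have hC : Uᵀ * M * U = Uᵀ * B * U := by
      have h1 : Uᵀ * M * U = (Uᵀ * U) * Uᵀ * B * U * (Uᵀ * U) := by
        simp only [hM, Matrix.mul_assoc]
      rw [h1, horth, Matrix.one_mul, Matrix.mul_one]
    calc ‖Uᵀ * B * U‖ = ‖Uᵀ * M * U‖ := by rw [hC]
      _ ≤ ‖Uᵀ * M‖ * ‖U‖ := Matrix.l2_opNorm_mul _ _
      _ ≤ (‖Uᵀ‖ * ‖M‖) * ‖U‖ :=
          mul_le_mul_of_nonneg_right (Matrix.l2_opNorm_mul _ _) (norm_nonneg _)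
      _ ≤ (1 * ‖M‖) * 1 := by
          apply mul_le_mul _ hU (norm_nonneg _) (by positivity)
          exact mul_le_mul_of_nonneg_right hUt (norm_nonneg _)
      _ = ‖M‖ := by ring
  -- put it together
  have hentry : (E ^ p * M * E ^ q) i j =
      (fun k => (E ^ p * U) i k) ⬝ᵥ ((Uᵀ * B * U) *ᵥ (fun l => (E ^ q * U) j l)) := by
    have hw' : (fun l => (Uᵀ * E ^ q) l j) = (fun l => (E ^ q * U) j l) := by
      funext l
      rw [hqsym, Matrix.transpose_apply]
    rw [hdecomp, triple_entry, hw']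
  rw [hentry]
  have hw := key q j
  have hu := key p i
  have hb2 : (μ * Real.sqrt r / Real.sqrt n) * (μ * Real.sqrt r / Real.sqrt n)
      = μ ^ 2 * r / n := by
    have hr' : Real.sqrt r * Real.sqrt r = (r:ℝ) := Real.mul_self_sqrt (Nat.cast_nonneg _)
    have hn' : Real.sqrt n * Real.sqrt n = (n:ℝ) := Real.mul_self_sqrt (Nat.cast_nonneg _)
    rw [div_mul_div_comm, show (μ * Real.sqrt r) * (μ * Real.sqrt r)
      = μ ^ 2 * (Real.sqrt r * Real.sqrt r) by ring, hr', hn']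
  calc |(fun k => (E ^ p * U) i k) ⬝ᵥ ((Uᵀ * B * U) *ᵥ (fun l => (E ^ q * U) j l))|
      ≤ ‖Uᵀ * B * U‖ * ‖L (fun k => (E ^ p * U) i k)‖ *
        ‖L (fun l => (E ^ q * U) j l)‖ := dot_mulVec_bound _ _ _
    _ ≤ ‖M‖ * ((μ * Real.sqrt r / Real.sqrt n) * (α * n * maxEntry E) ^ p) *
        ((μ * Real.sqrt r / Real.sqrt n) * (α * n * maxEntry E) ^ q) := by
        apply mul_le_mul _ hw (norm_nonneg _) (by positivity)
        exact mul_le_mul hCM hu (norm_nonneg _) (norm_nonneg _)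
    _ = ((μ * Real.sqrt r / Real.sqrt n) * (μ * Real.sqrt r / Real.sqrt n)) *
        (α * n * maxEntry E) ^ (p + q) * ‖M‖ := by rw [pow_add]; ring
    _ = (μ ^ 2 * r / n) * (α * n * maxEntry E) ^ (p + q) * specNorm M := by
        rw [hb2, specNorm_eq_l2]
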